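/- Let L : (0,∞) → [−∞,∞] be a function with L(t) < ∞ for some t > 0. Define x_∞ := sup{x ∈ ℝ : L^*(x) < ∞} (with sup ∅ := −∞), u_{−∞} := lim_{x→−∞} L^*(x), and u_∞ := lim_{x ↑ x_∞} L^*(x) if x_∞ > −∞, u_∞ := ∞ if x_∞ = −∞. Then the functions L^{*←} and L^{*⇐} are nondecreasing on ℝ and strictly increasing on the (possibly empty) interval (u_{−∞}, u_∞): for all u, v with u_{−∞} < u < v < u_∞ one has L^{*←}(u) < L^{*←}(v) and L^{*⇐}(u) < L^{*⇐}(v). -/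

import Mathlib

open Set MeasureTheory Filter

/-- Legendre–Fenchel transform `L^*(x) = sup_{t>0} [t·x − L(t)]`, with values in `[-∞,∞]`. -/
noncomputable def LF (L : ℝ → EReal) (x : ℝ) : EReal :=
  ⨆ (t : ℝ) (_ : 0 < t), ((t * x : ℝ) : EReal) - L t

/-- Smallest generalized inverse `L^{*←}(u) = inf {x ∈ ℝ : L^*(x) ≥ u}`, with `inf ∅ = ∞`. -/
noncomputable def geInv (L : ℝ → EReal) (u : ℝ) : EReal :=
  sInf ((fun x : ℝ => (x : EReal)) '' {x : ℝ | (u : EReal) ≤ LF L x})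

/-- Largest generalized inverse `L^{*⇐}(u) = inf {x ∈ ℝ : L^*(x) > u}`, with `inf ∅ = ∞`. -/
noncomputable def tgeInv (L : ℝ → EReal) (u : ℝ) : EReal :=
  sInf ((fun x : ℝ => (x : EReal)) '' {x : ℝ | (u : EReal) < LF L x})

/-- Hölder convolution `(L_1 ⊞ ⋯ ⊞ L_n)(t) = inf { Σ_j α_j L_j(t/α_j) : α_j > 0, Σ_j α_j = 1 }`,
with `inf ∅ = ∞`. -/
noncomputable def hconv (n : ℕ) (L : Fin n → ℝ → EReal) (t : ℝ) : EReal :=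
  ⨅ (α : Fin n → ℝ) (_ : (∀ j, 0 < α j) ∧ ∑ j, α j = 1),
    ∑ j, (α j : EReal) * L j (t / α j)

/-- Cramér–Chernoff function `L_X(t) = ln E e^{tX}`, with values in `(-∞,∞]`. -/
noncomputable def cramer {Ω : Type*} [MeasurableSpace Ω] (μ : Measure Ω) (X : Ω → ℝ)
    (t : ℝ) : EReal :=
  ENNReal.log (∫⁻ ω, ENNReal.ofReal (Real.exp (t * X ω)) ∂μ)

lemma LF_term_le (L : ℝ → EReal) (x t : ℝ) (ht : 0 < t) :
    ((t * x : ℝ) : EReal) - L t ≤ LF L x :=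
  le_iSup₂ (f := fun t (_ : 0 < t) => ((t * x : ℝ) : EReal) - L t) t ht

lemma LF_mono (L : ℝ → EReal) : Monotone (LF L) := by
  intro x y hxy
  refine iSup₂_le fun t ht => ?_
  refine le_trans ?_ (LF_term_le L y t ht)
  exact EReal.sub_le_sub (EReal.coe_le_coe_iff.mpr (by nlinarith)) le_rfl

lemma LF_convex_bound (L : ℝ → EReal) (hLb : ∀ t, 0 < t → L t ≠ ⊥)
    (l a b x₂ x₁ : ℝ) (hl0 : 0 < l) (hl1 : l < 1)
    (h2 : LF L x₂ ≤ (a : EReal)) (h1 : LF L x₁ ≤ (b : EReal)) :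
    LF L (l * x₂ + (1 - l) * x₁) ≤ ((l * a + (1 - l) * b : ℝ) : EReal) := by
  refine iSup₂_le fun t ht => ?_
  rcases eq_or_ne (L t) ⊤ with htop | htop
  · rw [htop]
    simp
  · obtain ⟨c, hc⟩ : ∃ c : ℝ, L t = (c : EReal) :=
      ⟨(L t).toReal, (EReal.coe_toReal htop (hLb t ht)).symm⟩
    have ha : t * x₂ - c ≤ a := by
      have h := (LF_term_le L x₂ t ht).trans h2
      rw [hc, ← EReal.coe_sub] at h
      exact_mod_cast h
    have hb : t * x₁ - c ≤ b := by
      have h := (LF_term_le L x₁ t ht).trans h1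
      rw [hc, ← EReal.coe_sub] at h
      exact_mod_cast h
    rw [hc, ← EReal.coe_sub, EReal.coe_le_coe_iff]
    nlinarith [mul_le_mul_of_nonneg_left ha hl0.le,
      mul_le_mul_of_nonneg_left hb (by linarith : (0:ℝ) ≤ 1 - l)]

lemma LF_key (L : ℝ → EReal) (hLb : ∀ t, 0 < t → L t ≠ ⊥) (u v x₀ x₁ : ℝ)
    (huv : u < v) (hx01 : x₀ < x₁) (htop : LF L x₁ ≠ ⊤)
    (hleft : ∀ x : ℝ, x < x₀ → LF L x ≤ (u : EReal))
    (hright : ∀ x : ℝ, x₀ < x → (v : EReal) ≤ LF L x) : False := by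
  set c := (LF L x₁).toReal with hcdef
  have hc : LF L x₁ ≤ (c : EReal) := EReal.le_coe_toReal htop
  set M := max c v with hM
  have hvM : v ≤ M := le_max_right _ _
  have hcM : c ≤ M := le_max_left _ _
  have hMu : u < M := lt_of_lt_of_le huv hvM
  set r := (M - v) / (M - u) with hr
  have hr0 : 0 ≤ r := div_nonneg (by linarith) (by linarith)
  have hr1 : r < 1 := (div_lt_one (by linarith)).mpr (by linarith)
  set l := (r + 1) / 2 with hl
  have hl0 : 0 < l := by simp [hl]; linarith
  have hl1 : l < 1 := by simp [hl]; linarith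
  have hlr : r < l := by simp [hl]; linarith
  set δ := (1 - l) * (x₁ - x₀) / 2 with hδ
  have hδ0 : 0 < δ := by
    have h1 : 0 < 1 - l := by linarith
    have h2 : 0 < x₁ - x₀ := by linarith
    rw [hδ]
    nlinarith
  set x₂ := x₀ - δ with hx₂
  set x := l * x₂ + (1 - l) * x₁ with hxdef
  have hx : x₀ < x := by
    simp only [hxdef, hx₂]
    nlinarith
  have h2 : LF L x₂ ≤ (u : EReal) := hleft _ (by simp [hx₂]; linarith)
  have hbnd := LF_convex_bound L hLb l u c x₂ x₁ hl0 hl1 h2 hc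
  have hvr : v ≤ l * u + (1 - l) * c := by
    have h := (hright x hx).trans hbnd
    exact_mod_cast h
  have hdiv : M - v < l * (M - u) := (div_lt_iff₀ (by linarith)).mp hlr
  nlinarith

lemma strict_aux (L : ℝ → EReal) (hLb : ∀ t, 0 < t → L t ≠ ⊥)
    (u v : ℝ) (huv : u < v)
    (x2 a y : ℝ) (h2 : LF L x2 < (u : EReal)) (hva : (v : EReal) < LF L a)
    (hay : a < y) (hy : LF L y ≠ ⊤)
    (S : ℝ → Set ℝ)
    (hS1 : ∀ (w : ℝ) (x : ℝ), x ∈ S w → (w : EReal) ≤ LF L x)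
    (hS2 : ∀ (w : ℝ) (x : ℝ), (w : EReal) < LF L x → x ∈ S w) :
    sInf ((fun x : ℝ => (x : EReal)) '' S u) < sInf ((fun x : ℝ => (x : EReal)) '' S v) := by
  by_contra hne
  have hsub : S v ⊆ S u := fun x hx =>
    hS2 u x (lt_of_lt_of_le (EReal.coe_lt_coe_iff.mpr huv) (hS1 v x hx))
  have hmono : sInf ((fun x : ℝ => (x : EReal)) '' S u) ≤
      sInf ((fun x : ℝ => (x : EReal)) '' S v) :=
    sInf_le_sInf (image_mono hsub)
  have heq : sInf ((fun x : ℝ => (x : EReal)) '' S u) =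
      sInf ((fun x : ℝ => (x : EReal)) '' S v) := le_antisymm hmono (not_lt.mp hne)
  have haSv : a ∈ S v := hS2 v a hva
  have hwa : sInf ((fun x : ℝ => (x : EReal)) '' S v) ≤ (a : EReal) :=
    sInf_le (mem_image_of_mem _ haSv)
  have hx2w : (x2 : EReal) ≤ sInf ((fun x : ℝ => (x : EReal)) '' S v) := by
    rw [← heq]
    refine le_sInf ?_
    rintro b ⟨z, hz, rfl⟩
    have hz' : (u : EReal) ≤ LF L z := hS1 u z hz
    by_contra hb
    have hzx2 : z ≤ x2 := EReal.coe_le_coe_iff.mp (not_le.mp hb).le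
    exact absurd (le_trans hz' (LF_mono L hzx2)) (not_le.mpr h2)
  have hwbot : sInf ((fun x : ℝ => (x : EReal)) '' S v) ≠ ⊥ := fun h => by
    rw [h] at hx2w; exact absurd hx2w (by simp)
  have hwtop : sInf ((fun x : ℝ => (x : EReal)) '' S v) ≠ ⊤ := fun h => by
    rw [h] at hwa; exact absurd hwa (by simp)
  obtain ⟨x₀, hx₀⟩ : ∃ x₀ : ℝ, sInf ((fun x : ℝ => (x : EReal)) '' S v) = (x₀ : EReal) :=
    ⟨_, (EReal.coe_toReal hwtop hwbot).symm⟩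
  have hx₀a : x₀ ≤ a := by rw [hx₀] at hwa; exact_mod_cast hwa
  have hleft : ∀ x : ℝ, x < x₀ → LF L x ≤ (u : EReal) := by
    intro x hxx₀
    by_contra h
    have hmem : x ∈ S u := hS2 u x (not_le.mp h)
    have hle : sInf ((fun x : ℝ => (x : EReal)) '' S v) ≤ (x : EReal) := by
      rw [← heq]; exact sInf_le (mem_image_of_mem _ hmem)
    rw [hx₀] at hle
    exact absurd (EReal.coe_le_coe_iff.mp hle) (not_le.mpr hxx₀)
  have hright : ∀ x : ℝ, x₀ < x → (v : EReal) ≤ LF L x := by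
    intro x hxx₀
    have hlt : sInf ((fun x : ℝ => (x : EReal)) '' S v) < (x : EReal) := by
      rw [hx₀]; exact_mod_cast hxx₀
    obtain ⟨b, hb, hbx⟩ := sInf_lt_iff.mp hlt
    obtain ⟨z, hz, rfl⟩ := hb
    have hzx : z ≤ x := EReal.coe_le_coe_iff.mp hbx.le
    exact le_trans (hS1 v z hz) (LF_mono L hzx)
  exact LF_key L hLb u v x₀ y huv (lt_of_le_of_lt hx₀a hay) hy hleft hright

/-- Proposition gen (f). The generalized inverses are nondecreasing on
`ℝ` and strictly increasing on the (possibly empty) interval `(u_{-∞}, u_∞)`, where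
`u_{-∞} = lim_{x→-∞} L^*(x)` and `u_∞ = lim_{x↑x_∞} L^*(x)` (`u_∞ := ∞` if
`x_∞ = sup dom L^* = -∞`); the limits of the monotone function `L^*` are expressed as
infimum/supremum. -/
theorem geInv_monotone_strictMono (L : ℝ → EReal)
    (hfin : ∃ t : ℝ, 0 < t ∧ L t ≠ ⊤)
    (xinf uminf uinf : EReal)
    (hx : xinf = sSup ((fun x : ℝ => (x : EReal)) '' {x : ℝ | LF L x < ⊤}))
    (hm : uminf = ⨅ x : ℝ, LF L x)
    (hi : uinf = if xinf = ⊥ then ⊤ else ⨆ (x : ℝ) (_ : (x : EReal) < xinf), LF L x) :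
    Monotone (geInv L) ∧ Monotone (tgeInv L) ∧
      ∀ u v : ℝ, uminf < (u : EReal) → u < v → (v : EReal) < uinf →
        geInv L u < geInv L v ∧ tgeInv L u < tgeInv L v := by
  refine ⟨?_, ?_, ?_⟩
  · intro u v huv
    exact sInf_le_sInf (image_mono fun x hx =>
      le_trans (EReal.coe_le_coe_iff.mpr huv) hx)
  · intro u v huv
    exact sInf_le_sInf (image_mono fun x hx =>
      lt_of_le_of_lt (EReal.coe_le_coe_iff.mpr huv) hx)
  · intro u v hu huv hv
    by_cases hxb : xinf = ⊥
    · exfalso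
      have hall : ∀ x : ℝ, LF L x = ⊤ := by
        intro x
        by_contra h
        have hmem : (x : EReal) ∈ (fun x : ℝ => (x : EReal)) '' {x | LF L x < ⊤} :=
          mem_image_of_mem _ (lt_top_iff_ne_top.mpr h)
        have hle := le_sSup hmem
        rw [← hx, hxb] at hle
        exact absurd hle (by simp)
      have htu : (⊤ : EReal) < (u : EReal) := by
        rw [hm] at hu
        simp only [hall, iInf_const] at hu; exact hu
      exact absurd htu not_top_lt
    · rw [hi, if_neg hxb] at hv
      rw [hm] at hu
      obtain ⟨x2, hx2⟩ : ∃ x2 : ℝ, LF L x2 < (u : EReal) := iInf_lt_iff.mp hu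
      have hLb : ∀ t, 0 < t → L t ≠ ⊥ := by
        intro t ht hbt
        have h := LF_term_le L x2 t ht
        rw [hbt] at h
        rw [EReal.coe_sub_bot] at h
        rw [top_le_iff.mp h] at hx2
        exact absurd hx2 (by simp)
      obtain ⟨a, ha⟩ := lt_iSup_iff.mp hv
      obtain ⟨haxi, hva⟩ := lt_iSup_iff.mp ha
      obtain ⟨y', hy'mem, hay⟩ := lt_sSup_iff.mp (hx ▸ haxi)
      obtain ⟨y, hytop, rfl⟩ := hy'mem
      have hay' : a < y := EReal.coe_lt_coe_iff.mp hay
      constructor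
      · exact strict_aux L hLb u v huv x2 a y hx2 hva hay' hytop.ne
          (fun w => {x | (w : EReal) ≤ LF L x}) (fun w x hx => hx) (fun w x hx => hx.le)
      · exact strict_aux L hLb u v huv x2 a y hx2 hva hay' hytop.ne
          (fun w => {x | (w : EReal) < LF L x}) (fun w x hx => hx.le) (fun w x hx => hx)
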